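/- For every natural number n ≥ 4, the graph G of the previous construction (on vertex set A = {±(2^i - 2^j) : 1 ≤ j < i ≤ n}, with 2^i - 2^j adjacent to -(2^k - 2^j) whenever j < i, j < k, i ≠ k) has at least 2·C(n,3) edges. -/

import Mathlib

namespace Stmt3Aux

noncomputable def lo (u : Finset ℕ) : ℕ := if h : u.Nonempty then u.min' h else 0
noncomputable def hi (u : Finset ℕ) : ℕ := if h : u.Nonempty then u.max' h else 0
noncomputable def mid (u : Finset ℕ) : ℕ := u.sum id - lo u - hi u

lemma lomidhi {a b c : ℕ} (hab : a < b) (hbc : b < c) :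
    lo {a,b,c} = a ∧ mid {a,b,c} = b ∧ hi {a,b,c} = c := by
  have hne : ({a,b,c} : Finset ℕ).Nonempty := ⟨a, by simp⟩
  have hlo : lo {a,b,c} = a := by
    rw [lo, dif_pos hne]
    refine le_antisymm (Finset.min'_le _ a (by simp)) (Finset.le_min' _ _ _ ?_)
    intro y hy; simp at hy; rcases hy with h|h|h <;> omega
  have hhi : hi {a,b,c} = c := by
    rw [hi, dif_pos hne]
    refine le_antisymm (Finset.max'_le _ _ _ ?_) (Finset.le_max' _ c (by simp))
    intro y hy; simp at hy; rcases hy with h|h|h <;> omega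
  have hsum : ({a,b,c} : Finset ℕ).sum id = a + b + c := by
    rw [Finset.sum_insert (by simp; omega), Finset.sum_insert (by simp; omega),
      Finset.sum_singleton]; simp; ring
  refine ⟨hlo, ?_, hhi⟩
  rw [mid, hsum, hlo, hhi]; omega

lemma nlem {a b a' b' : ℕ} (h : a < b) (h' : a' < b')
    (heq : 2^b - 2^a = 2^b' - 2^a') : a = a' ∧ b = b' := by
  have h1 : 2^a < 2^b := Nat.pow_lt_pow_right one_lt_two h
  have h1' : 2^a' < 2^b' := Nat.pow_lt_pow_right one_lt_two h'
  have hb : b = b' := by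
    by_contra hne
    rcases Nat.lt_or_ge b b' with hlt | hge
    · have e1 : 2^b ≤ 2^(b'-1) := Nat.pow_le_pow_right (by norm_num) (by omega)
      have e2 : 2^a' ≤ 2^(b'-1) := Nat.pow_le_pow_right (by norm_num) (by omega)
      have e3 : 2^(b'-1) + 2^(b'-1) = 2^b' := by
        have hb1 : b' - 1 + 1 = b' := by omega
        calc 2^(b'-1) + 2^(b'-1) = 2^(b'-1) * 2 := by ring
        _ = 2^(b'-1+1) := (pow_succ 2 _).symm
        _ = 2^b' := by rw [hb1]
      have e4 : 0 < 2^a := Nat.pow_pos (by norm_num)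
      omega
    · have hlt : b' < b := by omega
      have e1 : 2^b' ≤ 2^(b-1) := Nat.pow_le_pow_right (by norm_num) (by omega)
      have e2 : 2^a ≤ 2^(b-1) := Nat.pow_le_pow_right (by norm_num) (by omega)
      have e3 : 2^(b-1) + 2^(b-1) = 2^b := by
        have hb1 : b - 1 + 1 = b := by omega
        calc 2^(b-1) + 2^(b-1) = 2^(b-1) * 2 := by ring
        _ = 2^(b-1+1) := (pow_succ 2 _).symm
        _ = 2^b := by rw [hb1]
      have e4 : 0 < 2^a' := Nat.pow_pos (by norm_num)
      omega
  subst hb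
  have ha : 2^a = 2^a' := by omega
  exact ⟨Nat.pow_right_injective (le_refl 2) ha, rfl⟩

lemma rlem {a b a' b' : ℕ} (h : a < b) (h' : a' < b')
    (heq : (2:ℝ)^b - 2^a = 2^b' - 2^a') : a = a' ∧ b = b' := by
  apply nlem h h'
  have h1 : 2^a ≤ 2^b := Nat.pow_le_pow_right (by norm_num) h.le
  have h1' : 2^a' ≤ 2^b' := Nat.pow_le_pow_right (by norm_num) h'.le
  have : ((2^b - 2^a : ℕ) : ℝ) = ((2^b' - 2^a' : ℕ) : ℝ) := by
    rw [Nat.cast_sub h1, Nat.cast_sub h1']; push_cast; exact heq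
  exact_mod_cast this

lemma rpos {a b : ℕ} (h : a < b) : (0:ℝ) < 2^b - 2^a := by
  have : (2:ℝ)^a < 2^b := by
    apply pow_lt_pow_right₀ (by norm_num) h
  linarith

noncomputable def f (p : ℕ × Finset ℕ) : Sym2 ℝ :=
  if p.1 = 0 then s((2:ℝ)^(mid p.2) - 2^(lo p.2), -((2:ℝ)^(hi p.2) - 2^(lo p.2)))
  else s((2:ℝ)^(hi p.2) - 2^(lo p.2), -((2:ℝ)^(mid p.2) - 2^(lo p.2)))

lemma tri {n : ℕ} {u : Finset ℕ} (hu : u ∈ (Finset.Icc 1 n).powersetCard 3) :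
    ∃ a b c, a < b ∧ b < c ∧ 1 ≤ a ∧ b ≤ n ∧ c ≤ n ∧
      lo u = a ∧ mid u = b ∧ hi u = c ∧ u = {a,b,c} := by
  rw [Finset.mem_powersetCard] at hu
  obtain ⟨hsub, hcard⟩ := hu
  obtain ⟨x, y, z, hxy, hxz, hyz, rfl⟩ := Finset.card_eq_three.mp hcard
  have hx := hsub (by simp : x ∈ ({x,y,z} : Finset ℕ))
  have hy := hsub (by simp : y ∈ ({x,y,z} : Finset ℕ))
  have hz := hsub (by simp : z ∈ ({x,y,z} : Finset ℕ))
  simp [Finset.mem_Icc] at hx hy hz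
  have key : ∀ a b c : ℕ, a < b → b < c → ({x,y,z} : Finset ℕ) = {a,b,c} →
      1 ≤ a → b ≤ n → c ≤ n →
      ∃ a' b' c', a' < b' ∧ b' < c' ∧ 1 ≤ a' ∧ b' ≤ n ∧ c' ≤ n ∧
        lo {x,y,z} = a' ∧ mid {x,y,z} = b' ∧ hi {x,y,z} = c' ∧
        ({x,y,z} : Finset ℕ) = {a',b',c'} := by
    intro a b c hab hbc hset ha hb hc
    obtain ⟨l1, l2, l3⟩ := lomidhi hab hbc
    rw [hset]
    exact ⟨a, b, c, hab, hbc, ha, hb, hc, l1, l2, l3, rfl⟩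
  have hset : ∀ a b c : ℕ, x = a ∨ x = b ∨ x = c → y = a ∨ y = b ∨ y = c →
      z = a ∨ z = b ∨ z = c → (a = x ∨ a = y ∨ a = z) → (b = x ∨ b = y ∨ b = z) →
      (c = x ∨ c = y ∨ c = z) → ({x,y,z} : Finset ℕ) = {a,b,c} := by
    intro a b c h1 h2 h3 h4 h5 h6
    ext t; simp; constructor <;> rintro (rfl|rfl|rfl) <;> tauto
  rcases lt_trichotomy x y with h1 | h1 | h1 <;>
    rcases lt_trichotomy y z with h2 | h2 | h2 <;>
    rcases lt_trichotomy x z with h3 | h3 | h3 <;>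
    first
      | omega
      | exact absurd h1 hxy | exact absurd h2 hyz | exact absurd h3 hxz
      | exact key x y z (by omega) (by omega) (hset _ _ _ (by omega) (by omega) (by omega) (by omega) (by omega) (by omega)) (by omega) (by omega) (by omega)
      | exact key x z y (by omega) (by omega) (hset _ _ _ (by omega) (by omega) (by omega) (by omega) (by omega) (by omega)) (by omega) (by omega) (by omega)
      | exact key y x z (by omega) (by omega) (hset _ _ _ (by omega) (by omega) (by omega) (by omega) (by omega) (by omega)) (by omega) (by omega) (by omega)
      | exact key y z x (by omega) (by omega) (hset _ _ _ (by omega) (by omega) (by omega) (by omega) (by omega) (by omega)) (by omega) (by omega) (by omega)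
      | exact key z x y (by omega) (by omega) (hset _ _ _ (by omega) (by omega) (by omega) (by omega) (by omega) (by omega)) (by omega) (by omega) (by omega)
      | exact key z y x (by omega) (by omega) (hset _ _ _ (by omega) (by omega) (by omega) (by omega) (by omega) (by omega)) (by omega) (by omega) (by omega)

end Stmt3Aux


/-- The graph on `A = {±(2^i - 2^j)}` with edges `{2^i - 2^j, -(2^k - 2^j)}`
(for `j < i`, `j < k`, `i ≠ k`) has at least `2 * C(n,3)` edges. -/
theorem stmt_3 (n : ℕ) (hn : 4 ≤ n) :
    2 * Nat.choose n 3 ≤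
      {e : Sym2 ℝ | ∃ i j k : ℕ, 1 ≤ j ∧ j < i ∧ i ≤ n ∧ j < k ∧ k ≤ n ∧ i ≠ k ∧
        e = s((2:ℝ) ^ i - 2 ^ j, -((2:ℝ) ^ k - 2 ^ j))}.ncard := by
  classical
  set S := {e : Sym2 ℝ | ∃ i j k : ℕ, 1 ≤ j ∧ j < i ∧ i ≤ n ∧ j < k ∧ k ≤ n ∧ i ≠ k ∧
        e = s((2:ℝ) ^ i - 2 ^ j, -((2:ℝ) ^ k - 2 ^ j))} with hS
  set T : Finset (ℕ × Finset ℕ) :=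
    (Finset.range 2) ×ˢ ((Finset.Icc 1 n).powersetCard 3) with hT
  have hcard : T.card = 2 * Nat.choose n 3 := by
    rw [hT, Finset.card_product, Finset.card_range, Finset.card_powersetCard,
      Nat.card_Icc]
    simp
  have himg : ∀ p ∈ T, Stmt3Aux.f p ∈ S := by
    rintro ⟨t, u⟩ hp
    rw [hT, Finset.mem_product] at hp
    obtain ⟨a, b, c, hab, hbc, ha, hb, hc, hl, hm, hh, -⟩ := Stmt3Aux.tri hp.2
    have ht : t = 0 ∨ t = 1 := by
      have := hp.1; simp [Finset.mem_range] at this; omega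
    rcases ht with rfl | rfl
    · exact ⟨b, a, c, ha, hab, hb, hab.trans hbc, hc, (hbc.ne),
        by simp [Stmt3Aux.f, hl, hm, hh]⟩
    · exact ⟨c, a, b, ha, hab.trans hbc, hc, hab, hb, (hbc.ne'),
        by simp [Stmt3Aux.f, hl, hm, hh]⟩
  have fv0 : ∀ (u : Finset ℕ) (a b c : ℕ), Stmt3Aux.lo u = a → Stmt3Aux.mid u = b →
      Stmt3Aux.hi u = c →
      Stmt3Aux.f (0, u) = s((2:ℝ)^b - 2^a, -((2:ℝ)^c - 2^a)) := by
    intro u a b c h1 h2 h3; simp [Stmt3Aux.f, h1, h2, h3]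
  have fv1 : ∀ (u : Finset ℕ) (a b c : ℕ), Stmt3Aux.lo u = a → Stmt3Aux.mid u = b →
      Stmt3Aux.hi u = c →
      Stmt3Aux.f (1, u) = s((2:ℝ)^c - 2^a, -((2:ℝ)^b - 2^a)) := by
    intro u a b c h1 h2 h3; simp [Stmt3Aux.f, h1, h2, h3]
  have hinj : Set.InjOn Stmt3Aux.f T := by
    rintro ⟨t, u⟩ hp ⟨t', u'⟩ hq heq
    rw [Finset.mem_coe, hT, Finset.mem_product] at hp hq
    obtain ⟨a, b, c, hab, hbc, ha, hb, hc, hl, hm, hh, hu⟩ := Stmt3Aux.tri hp.2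
    obtain ⟨a', b', c', hab', hbc', ha', hb', hc', hl', hm', hh', hu'⟩ :=
      Stmt3Aux.tri hq.2
    have huu : u = ({a,b,c} : Finset ℕ) := hu
    have huu' : u' = ({a',b',c'} : Finset ℕ) := hu'
    have hac := hab.trans hbc
    have hac' := hab'.trans hbc'
    have ht : t = 0 ∨ t = 1 := by
      have := hp.1; simp [Finset.mem_range] at this; omega
    have ht' : t' = 0 ∨ t' = 1 := by
      have := hq.1; simp [Finset.mem_range] at this; omega
    have heqset : a = a' → b = b' → c = c' → u = u' := by
      rintro rfl rfl rfl; rw [huu, huu']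
    rcases ht with rfl | rfl <;> rcases ht' with rfl | rfl
    · rw [fv0 u a b c hl hm hh, fv0 u' a' b' c' hl' hm' hh', Sym2.eq_iff] at heq
      rcases heq with ⟨e1, e2⟩ | ⟨e1, e2⟩
      · rw [neg_inj] at e2
        obtain ⟨ea1, eb1⟩ := Stmt3Aux.rlem hab hab' e1
        obtain ⟨ea2, eb2⟩ := Stmt3Aux.rlem hac hac' e2
        exact Prod.ext rfl (heqset ea1 eb1 eb2)
      · exfalso
        have := Stmt3Aux.rpos hab
        have := Stmt3Aux.rpos hac'
        linarith
    · rw [fv0 u a b c hl hm hh, fv1 u' a' b' c' hl' hm' hh', Sym2.eq_iff] at heq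
      rcases heq with ⟨e1, e2⟩ | ⟨e1, e2⟩
      · rw [neg_inj] at e2
        obtain ⟨ea1, eb1⟩ := Stmt3Aux.rlem hab hac' e1
        obtain ⟨ea2, eb2⟩ := Stmt3Aux.rlem hac hab' e2
        exfalso; omega
      · exfalso
        have := Stmt3Aux.rpos hab
        have := Stmt3Aux.rpos hab'
        linarith
    · rw [fv1 u a b c hl hm hh, fv0 u' a' b' c' hl' hm' hh', Sym2.eq_iff] at heq
      rcases heq with ⟨e1, e2⟩ | ⟨e1, e2⟩
      · rw [neg_inj] at e2
        obtain ⟨ea1, eb1⟩ := Stmt3Aux.rlem hac hab' e1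
        obtain ⟨ea2, eb2⟩ := Stmt3Aux.rlem hab hac' e2
        exfalso; omega
      · exfalso
        have := Stmt3Aux.rpos hac
        have := Stmt3Aux.rpos hac'
        linarith
    · rw [fv1 u a b c hl hm hh, fv1 u' a' b' c' hl' hm' hh', Sym2.eq_iff] at heq
      rcases heq with ⟨e1, e2⟩ | ⟨e1, e2⟩
      · rw [neg_inj] at e2
        obtain ⟨ea1, eb1⟩ := Stmt3Aux.rlem hac hac' e1
        obtain ⟨ea2, eb2⟩ := Stmt3Aux.rlem hab hab' e2
        exact Prod.ext rfl (heqset ea1 eb2 eb1)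
      · exfalso
        have := Stmt3Aux.rpos hac
        have := Stmt3Aux.rpos hab'
        linarith
  have hfin : S.Finite := by
    apply Set.Finite.subset
      (Finset.finite_toSet (((Finset.Icc 1 n) ×ˢ (Finset.Icc 1 n) ×ˢ (Finset.Icc 1 n)).image
        (fun p : ℕ × ℕ × ℕ =>
          s((2:ℝ) ^ p.1 - 2 ^ p.2.1, -((2:ℝ) ^ p.2.2 - 2 ^ p.2.1)))))
    rintro e ⟨i, j, k, h1, h2, h3, h4, h5, h6, rfl⟩
    simp only [Finset.coe_image, Set.mem_image, Finset.mem_coe]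
    refine ⟨(i, j, k), ?_, rfl⟩
    simp only [Finset.mem_product, Finset.mem_Icc]
    refine ⟨⟨by omega, by omega⟩, ⟨by omega, by omega⟩, by omega, by omega⟩
  calc 2 * Nat.choose n 3 = T.card := hcard.symm
    _ = (T.image Stmt3Aux.f).card := (Finset.card_image_of_injOn hinj).symm
    _ = (↑(T.image Stmt3Aux.f) : Set (Sym2 ℝ)).ncard := (Set.ncard_coe_finset _).symm
    _ ≤ S.ncard := by
        apply Set.ncard_le_ncard ?_ hfin
        intro e he
        simp only [Finset.coe_image, Set.mem_image, Finset.mem_coe] at he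
        obtain ⟨p, hp, rfl⟩ := he
        exact himg p hp
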